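/- Let Γ = (γ_{ij})_{i,j=1}^N be a gain matrix with each γ_{ij} ∈ K∞ ∪ {0} containing no zero row, let μ_1, …, μ_N be monotone aggregation functions, and let Γμ(s)_i = μ_i(γ_{i1}(s_1), …, γ_{iN}(s_N)) be the induced gain operator; assume Γμ satisfies the small gain condition. Let κ_0 > 0, κ_Γ > κ_h > 0, let φ(v) = Γμ(v)·(1 + min{0, (κ_Γ − 2‖v‖)/(‖v‖ + κ_0)}) + max{0, κ_h − 2‖v‖}·e, and let c ∈ ℝ^N with c ≫ 0 and ‖c‖ < κ_Γ/2. Set Γμ^max := Γμ((κ_Γ + κ_0)·e), choose k ∈ ℕ, k ≥ 1, with (1/(2k − 1))·Γμ^max ≪ c, and let δ > 0 satisfy δ < min{(κ_Γ − κ_h)/(2√N), (κ_Γ + 2κ_0)/(2k√N)}. Let y^1, …, y^{N+1} ∈ ℝ^N_+ × {0, 1}, y^j = (v^j, t_j), be the vertices of an N-simplex of the triangulation K̃_1(δ), i.e., y^{j+1} = y^j + d^j with pairwise distinct increments d^j ∈ {δe_1, …, δe_N, e_{N+1}}, such that κ_Γ/2 ≤ ‖v^j‖ < κ_Γ + κ_0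 for all j and ‖v^1 + δ·e‖ ≥ κ_Γ + κ_0. Define labels l(y^j) = (1 − t_j)c + t_j φ(v^j) − v^j and the (N+1)×(N+1) labeling matrix L whose j-th column is (1, l(y^j)^T)^T. Then the simplex is not complete: there is no matrix W with L·W = I_{N+1} such that every row of W is lexicographically positive. -/

import Mathlib

/-- A function `α : ℝ_+ → ℝ_+` is of class `K∞`: continuous, strictly
increasing, unbounded and `α(0) = 0` (stated on `[0,∞)`). -/
def ClassKInf (α : ℝ → ℝ) : Prop :=
  ContinuousOn α (Set.Ici 0) ∧ StrictMonoOn α (Set.Ici 0) ∧ α 0 = 0 ∧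
    (∀ x, 0 ≤ x → 0 ≤ α x) ∧ (∀ M : ℝ, ∃ x, 0 ≤ x ∧ M < α x)

/-- A monotone aggregation function `μ : ℝ^N_+ → ℝ_+`: continuous, positive
(`μ(s) = 0` iff `s = 0`), strictly increasing with respect to `≪`, and
unbounded as `‖s‖ → ∞`. -/
def IsMAF {n : ℕ} (μ : EuclideanSpace ℝ (Fin n) → ℝ) : Prop :=
  ContinuousOn μ {s : EuclideanSpace ℝ (Fin n) | ∀ i, 0 ≤ s i} ∧
    (∀ s : EuclideanSpace ℝ (Fin n), (∀ i, 0 ≤ s i) → 0 ≤ μ s) ∧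
    (∀ s : EuclideanSpace ℝ (Fin n), (∀ i, 0 ≤ s i) → (μ s = 0 ↔ s = 0)) ∧
    (∀ s t : EuclideanSpace ℝ (Fin n), (∀ i, 0 ≤ s i) → (∀ i, 0 ≤ t i) →
      (∀ i, s i < t i) → μ s < μ t) ∧
    (∀ M : ℝ, ∃ C : ℝ, ∀ s : EuclideanSpace ℝ (Fin n), (∀ i, 0 ≤ s i) →
      C ≤ ‖s‖ → M ≤ μ s)

/-- A row vector is lexicographically positive if its first nonzero entry is
positive. -/
def LexPosRow {n : ℕ} (w : Fin n → ℝ) : Prop :=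
  ∃ j, 0 < w j ∧ ∀ i, i < j → w i = 0


lemma lexpos_sum {n : ℕ} (hn : 0 < n) (a : Fin n → ℝ) (w : Fin n → Fin n → ℝ)
    (ha : ∀ j, 0 < a j) (hw : ∀ j, LexPosRow (w j)) :
    LexPosRow (fun i => ∑ j, a j * w j i) := by
  classical
  choose p hp hp0 using hw
  have hne : (Finset.univ : Finset (Fin n)).Nonempty := ⟨⟨0, hn⟩, Finset.mem_univ _⟩
  obtain ⟨j0, -, hj0⟩ := Finset.exists_mem_eq_inf' hne p
  set m := Finset.univ.inf' hne p with hm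
  refine ⟨m, ?_, ?_⟩
  · apply Finset.sum_pos'
    · intro j _
      rcases lt_or_eq_of_le (Finset.inf'_le p (Finset.mem_univ j) : m ≤ p j) with h | h
      · rw [hp0 j m h, mul_zero]
      · have hpos : 0 < w j m := by rw [hm, h]; exact hp j
        exact (mul_pos (ha j) hpos).le
    · refine ⟨j0, Finset.mem_univ _, ?_⟩
      have : w j0 m > 0 := by rw [hj0]; exact hp j0
      exact mul_pos (ha j0) this
  · intro i hi
    apply Finset.sum_eq_zero
    intro j _
    have : i < p j := lt_of_lt_of_le hi (Finset.inf'_le p (Finset.mem_univ j))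
    rw [hp0 j i this, mul_zero]

lemma IsMAF.mono {n : ℕ} {μ : EuclideanSpace ℝ (Fin n) → ℝ} (h : IsMAF μ)
    {s t : EuclideanSpace ℝ (Fin n)} (hs : ∀ i, 0 ≤ s i) (ht : ∀ i, 0 ≤ t i)
    (hst : ∀ i, s i ≤ t i) : μ s ≤ μ t := by
  classical
  set one : EuclideanSpace ℝ (Fin n) := WithLp.toLp 2 (fun _ => 1) with hone
  have happ : ∀ (ε : ℝ) (i : Fin n), (t + ε • one) i = t i + ε := by
    intro ε i
    simp [hone, PiLp.add_apply, PiLp.smul_apply, smul_eq_mul]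
  have key : ∀ ε : ℝ, 0 < ε → μ s < μ (t + ε • one) := by
    intro ε hε
    refine h.2.2.2.1 s (t + ε • one) hs (fun i => by rw [happ]; linarith [ht i])
      (fun i => by rw [happ]; linarith [hst i])
  have hmap : Set.MapsTo (fun ε : ℝ => t + ε • one) (Set.Ici 0)
      {x : EuclideanSpace ℝ (Fin n) | ∀ i, 0 ≤ x i} := by
    intro ε hε
    intro i
    show (0:ℝ) ≤ (t + ε • one) i
    rw [happ]
    have : (0:ℝ) ≤ ε := hε
    linarith [ht i]
  have hc1 : Continuous (fun ε : ℝ => t + ε • one) := by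
    exact continuous_const.add (continuous_id.smul continuous_const)
  have hcontOn : ContinuousOn (fun ε : ℝ => μ (t + ε • one)) (Set.Ici 0) :=
    h.1.comp hc1.continuousOn hmap
  have hcw : ContinuousWithinAt (fun ε : ℝ => μ (t + ε • one)) (Set.Ioi 0) 0 :=
    (hcontOn 0 (by simp)).mono Set.Ioi_subset_Ici_self
  have h0 : μ (t + (0:ℝ) • one) = μ t := by simp
  have hlim : Filter.Tendsto (fun ε : ℝ => μ (t + ε • one))
      (nhdsWithin 0 (Set.Ioi 0)) (nhds (μ t)) := by
    have := hcw
    rw [ContinuousWithinAt] at this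
    rwa [h0] at this
  exact ge_of_tendsto hlim (Filter.eventually_of_mem self_mem_nhdsWithin
    fun ε hε => (key ε hε).le)

/-- Theorem (the path cannot enter region Ⅳ'): let `Γ` be a gain matrix with
entries in `K∞ ∪ {0}` and no zero row, `μ_i` monotone aggregation functions,
`Γμ` the induced gain operator satisfying the small gain condition, `φ` as in
the paper, and `c ≫ 0` with `‖c‖ < κ_Γ/2`.  With `Γμ^max = Γμ((κ_Γ+κ_0)e)`,
`k ≥ 1` such that `(1/(2k−1))Γμ^max ≪ c` and
`δ < min{(κ_Γ−κ_h)/(2√N), (κ_Γ+2κ_0)/(2k√N)}`, any `N`-simplex of `K̃₁(δ)`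
with vertices `y^j = (v^j, t_j)` satisfying `κ_Γ/2 ≤ ‖v^j‖ < κ_Γ + κ_0` for
all `j` and `‖v^1 + δe‖ ≥ κ_Γ + κ_0` is not complete. -/
theorem no_complete_simplex_near_region_four
    {N : ℕ} (hN : 0 < N)
    (γ : Fin N → Fin N → ℝ → ℝ)
    (hγ : ∀ i j, ClassKInf (γ i j) ∨ ∀ x, γ i j x = 0)
    (hnozero : ∀ i : Fin N, ∃ j : Fin N, ClassKInf (γ i j))
    (μ : Fin N → EuclideanSpace ℝ (Fin N) → ℝ) (hμ : ∀ i, IsMAF (μ i))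
    (Γμ : EuclideanSpace ℝ (Fin N) → EuclideanSpace ℝ (Fin N))
    (hΓμ : ∀ (s : EuclideanSpace ℝ (Fin N)) (i : Fin N),
      Γμ s i = μ i (WithLp.toLp 2 (fun j => γ i j (s j))))
    -- small gain condition
    (hsg : ∀ s : EuclideanSpace ℝ (Fin N), (∀ i, 0 ≤ s i) → s ≠ 0 →
      ¬ (∀ i, s i ≤ Γμ s i))
    (κ₀ κΓ κh : ℝ) (hκ₀ : 0 < κ₀) (hκh : 0 < κh) (hκΓ : κh < κΓ)
    (φ : EuclideanSpace ℝ (Fin N) → EuclideanSpace ℝ (Fin N))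
    (hφ : ∀ (v : EuclideanSpace ℝ (Fin N)) (i : Fin N),
      φ v i = Γμ v i * (1 + min 0 ((κΓ - 2 * ‖v‖) / (‖v‖ + κ₀)))
        + max 0 (κh - 2 * ‖v‖))
    (c : EuclideanSpace ℝ (Fin N)) (hc : ∀ i, 0 < c i) (hcnorm : ‖c‖ < κΓ / 2)
    -- `Γμ^max`, the choice of `k` and the bound on `δ`
    (e : EuclideanSpace ℝ (Fin N)) (he : ∀ i, e i = 1)
    (Γmax : EuclideanSpace ℝ (Fin N))
    (hΓmax : Γmax = Γμ ((κΓ + κ₀) • e))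
    (k : ℕ) (hk : 1 ≤ k)
    (hkc : ∀ i, (1 / (2 * (k : ℝ) - 1)) * Γmax i < c i)
    (δ : ℝ) (hδ : 0 < δ)
    (hδlt : δ < min ((κΓ - κh) / (2 * Real.sqrt N))
      ((κΓ + 2 * κ₀) / (2 * (k : ℝ) * Real.sqrt N)))
    -- the vertices `y^j = (v^j, t_j)` of an `N`-simplex of `K̃₁(δ)`
    (v : Fin (N + 1) → EuclideanSpace ℝ (Fin N)) (t : Fin (N + 1) → ℝ)
    (hvnonneg : ∀ j i, 0 ≤ v j i) (ht01 : ∀ j, t j = 0 ∨ t j = 1)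
    (d : Fin N → EuclideanSpace ℝ (Fin N) × ℝ)
    (hdinj : Function.Injective d)
    (hdmem : ∀ j : Fin N,
      (∃ i : Fin N, d j = (δ • EuclideanSpace.single i (1 : ℝ), (0 : ℝ))) ∨
        d j = (0, 1))
    (hstep : ∀ j : Fin N,
      v j.succ = v j.castSucc + (d j).1 ∧ t j.succ = t j.castSucc + (d j).2)
    -- the simplex lies in region Ⅲ' touching region Ⅳ'
    (hlow : ∀ j, κΓ / 2 ≤ ‖v j‖) (hhigh : ∀ j, ‖v j‖ < κΓ + κ₀)
    (htouch : κΓ + κ₀ ≤ ‖v 0 + δ • e‖)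
    -- the labels and the labeling matrix
    (lab : Fin (N + 1) → EuclideanSpace ℝ (Fin N))
    (hlab : ∀ j, lab j = (1 - t j) • c + t j • φ (v j) - v j)
    (L : Matrix (Fin (N + 1)) (Fin (N + 1)) ℝ)
    (hLtop : ∀ j, L 0 j = 1)
    (hLrow : ∀ (i : Fin N) (j : Fin (N + 1)), L i.succ j = lab j i) :
    ¬ ∃ W : Matrix (Fin (N + 1)) (Fin (N + 1)) ℝ,
        L * W = 1 ∧ ∀ i, LexPosRow (W i) := by
  
  classical
  have hsN : 0 < Real.sqrt N := Real.sqrt_pos.mpr (by exact_mod_cast hN)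
  have hk1 : (1:ℝ) ≤ (k:ℝ) := by exact_mod_cast hk
  have h2k1 : (0:ℝ) < 2*(k:ℝ) - 1 := by linarith
  -- structure of the vertices
  have hv01 : ∀ J : Fin (N+1), ∀ i : Fin N,
      v J i = v 0 i ∨ (v J i = v 0 i + δ ∧ ∃ m : Fin N, m.castSucc < J ∧
        d m = (δ • EuclideanSpace.single i (1:ℝ), (0:ℝ))) := by
    intro J
    induction J using Fin.induction with
    | zero => intro i; exact Or.inl rfl
    | succ j ih =>
      intro i
      have happ : v j.succ i = v j.castSucc i + (d j).1 i := by
        rw [(hstep j).1]; rfl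
      rcases hdmem j with ⟨i', hi'⟩ | h0
      · by_cases hii : i = i'
        · subst hii
          have hdi : (d j).1 i = δ := by
            rw [hi']
            simp [EuclideanSpace.single_apply]
          rcases ih i with h | ⟨h, m, hm, hdm⟩
          · exact Or.inr ⟨by rw [happ, h, hdi], j, Fin.castSucc_lt_succ, hi'⟩
          · exfalso
            have hmj : m = j := hdinj (hdm.trans hi'.symm)
            rw [hmj] at hm
            exact lt_irrefl _ hm
        · have hdi : (d j).1 i = 0 := by
            rw [hi']
            simp [EuclideanSpace.single_apply, hii]
          rcases ih i with h | ⟨h, m, hm, hdm⟩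
          · exact Or.inl (by rw [happ, h, hdi, add_zero])
          · exact Or.inr ⟨by rw [happ, h, hdi, add_zero],
              m, hm.trans (Fin.castSucc_lt_succ), hdm⟩
      · have hdi : (d j).1 i = 0 := by rw [h0]; rfl
        rcases ih i with h | ⟨h, m, hm, hdm⟩
        · exact Or.inl (by rw [happ, h, hdi, add_zero])
        · exact Or.inr ⟨by rw [happ, h, hdi, add_zero],
            m, hm.trans (Fin.castSucc_lt_succ), hdm⟩
  have hlo : ∀ (J : Fin (N+1)) (i : Fin N), v 0 i ≤ v J i := by
    intro J i
    rcases hv01 J i with h | ⟨h, -⟩ <;> rw [h] <;> linarith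
  have hhi : ∀ (J : Fin (N+1)) (i : Fin N), v J i ≤ v 0 i + δ := by
    intro J i
    rcases hv01 J i with h | ⟨h, -⟩ <;> rw [h] <;> linarith
  -- norm lower bound on all vertices
  have hnormlow : ∀ J : Fin (N+1), κΓ + κ₀ - δ * Real.sqrt N ≤ ‖v J‖ := by
    intro J
    set w : EuclideanSpace ℝ (Fin N) := v 0 + δ • e - v J with hw
    have hwi : ∀ i, w i = v 0 i + δ - v J i := by
      intro i
      simp [hw, PiLp.add_apply, PiLp.sub_apply, PiLp.smul_apply, smul_eq_mul, he i]
    have hwle : ‖w‖ ≤ δ * Real.sqrt N := by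
      rw [EuclideanSpace.norm_eq]
      have hsum : (∑ i : Fin N, ‖w i‖^2) ≤ ∑ _i : Fin N, δ^2 := by
        apply Finset.sum_le_sum
        intro i _
        have h1 : 0 ≤ w i := by rw [hwi]; linarith [hhi J i]
        have h2 : w i ≤ δ := by rw [hwi]; linarith [hlo J i]
        rw [Real.norm_eq_abs, abs_of_nonneg h1]
        nlinarith
      calc Real.sqrt (∑ i, ‖w i‖^2) ≤ Real.sqrt (∑ _i : Fin N, δ^2) :=
            Real.sqrt_le_sqrt hsum
        _ = δ * Real.sqrt N := by
            rw [Finset.sum_const, Finset.card_univ, Fintype.card_fin, nsmul_eq_mul]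
            rw [show ((N:ℝ) * δ^2) = δ^2 * N by ring,
              Real.sqrt_mul (sq_nonneg δ), Real.sqrt_sq hδ.le]
    have hdec : v 0 + δ • e = v J + w := by rw [hw]; abel
    have htri : ‖v 0 + δ • e‖ ≤ ‖v J‖ + ‖w‖ := by
      rw [hdec]; exact norm_add_le _ _
    linarith [htouch]
  -- bound on δ √N
  have hδN2 : 2 * (k:ℝ) * (δ * Real.sqrt N) < κΓ + 2*κ₀ := by
    have h := (lt_min_iff.mp hδlt).2
    have hpos : 0 < 2*(k:ℝ)*Real.sqrt N := by positivity
    have := (lt_div_iff₀ hpos).mp h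
    nlinarith
  -- coordinates bounded by the norm
  have hcoord : ∀ (x : EuclideanSpace ℝ (Fin N)) (i : Fin N), x i ≤ ‖x‖ := by
    intro x i
    have habs : |x i| ≤ ‖x‖ := by
      rw [EuclideanSpace.norm_eq, show |x i| = Real.sqrt ((x i)^2) from
        (Real.sqrt_sq_eq_abs _).symm]
      apply Real.sqrt_le_sqrt
      have := Finset.single_le_sum (f := fun m => ‖x m‖^2)
        (fun m _ => by positivity) (Finset.mem_univ i)
      simpa [Real.norm_eq_abs, sq_abs] using this
    linarith [le_abs_self (x i)]
  -- γ facts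
  have hγ0 : ∀ i j x, 0 ≤ x → 0 ≤ γ i j x := by
    intro i j x hx
    rcases hγ i j with h | h
    · exact h.2.2.2.1 x hx
    · rw [h x]
  have hγmono : ∀ i j x y, 0 ≤ x → x ≤ y → γ i j x ≤ γ i j y := by
    intro i j x y hx hxy
    rcases hγ i j with h | h
    · rcases eq_or_lt_of_le hxy with rfl | hlt
      · exact le_refl _
      · exact (h.2.1 (Set.mem_Ici.mpr hx) (Set.mem_Ici.mpr (hx.trans hxy)) hlt).le
    · rw [h x, h y]
  -- Γμ bounds
  have hκΓκ0 : (0:ℝ) < κΓ + κ₀ := by linarith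
  have hΓmaxi : ∀ i, Γmax i = μ i (WithLp.toLp 2 (fun j => γ i j (κΓ + κ₀))) := by
    intro i
    rw [hΓmax, hΓμ]
    congr 2
    funext j
    congr 1
    simp [PiLp.smul_apply, smul_eq_mul, he j]
  have hΓmax0 : ∀ i, 0 ≤ Γmax i := by
    intro i
    rw [hΓmaxi]
    exact (hμ i).2.1 _ (fun j => hγ0 i j _ hκΓκ0.le)
  have hΓμ0 : ∀ (J : Fin (N+1)) (i : Fin N), 0 ≤ Γμ (v J) i := by
    intro J i
    rw [hΓμ]
    exact (hμ i).2.1 _ (fun j => hγ0 i j _ (hvnonneg J j))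
  have hΓμle : ∀ (J : Fin (N+1)) (i : Fin N), Γμ (v J) i ≤ Γmax i := by
    intro J i
    rw [hΓμ, hΓmaxi]
    refine IsMAF.mono (hμ i) (fun j => hγ0 i j _ (hvnonneg J j))
      (fun j => hγ0 i j _ hκΓκ0.le) (fun j => hγmono i j _ _ (hvnonneg J j) ?_)
    exact (hcoord (v J) j).trans (hhigh J).le
  -- the key bound: φ(v J) i < c i
  have hφlt : ∀ (J : Fin (N+1)) (i : Fin N), φ (v J) i < c i := by
    intro J i
    have hnJ := hlow J
    have hnJ2 := hhigh J
    have hden : (0:ℝ) < ‖v J‖ + κ₀ := by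
      have := norm_nonneg (v J); linarith
    have hmin : min 0 ((κΓ - 2*‖v J‖)/(‖v J‖+κ₀)) = (κΓ - 2*‖v J‖)/(‖v J‖+κ₀) := by
      apply min_eq_right
      apply div_nonpos_of_nonpos_of_nonneg
      · linarith
      · linarith
    have hmax : max 0 (κh - 2*‖v J‖) = 0 := max_eq_left (by linarith)
    rw [hφ, hmin, hmax, add_zero]
    have hfac : 1 + (κΓ - 2*‖v J‖)/(‖v J‖+κ₀) = (κΓ + κ₀ - ‖v J‖)/(‖v J‖+κ₀) := by
      field_simp
      ring
    rw [hfac]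
    have hρ0 : 0 ≤ (κΓ + κ₀ - ‖v J‖)/(‖v J‖+κ₀) := div_nonneg (by linarith) hden.le
    have hρle : (κΓ + κ₀ - ‖v J‖)/(‖v J‖+κ₀) ≤ 1/(2*(k:ℝ)-1) := by
      rw [div_le_div_iff₀ hden h2k1]
      have h1 : κΓ + κ₀ - ‖v J‖ ≤ δ * Real.sqrt N := by linarith [hnormlow J]
      have h3 := mul_le_mul_of_nonneg_right h1 h2k1.le
      nlinarith [hnormlow J]
    calc Γμ (v J) i * ((κΓ + κ₀ - ‖v J‖)/(‖v J‖+κ₀))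
        ≤ Γmax i * (1/(2*(k:ℝ)-1)) :=
          mul_le_mul (hΓμle J i) hρle hρ0 (hΓmax0 i)
      _ = (1/(2*(k:ℝ)-1)) * Γmax i := mul_comm _ _
      _ < c i := hkc i
  -- choose a coordinate where v 0 dominates c
  have hex : ∃ i, c i < v 0 i := by
    by_contra hcon
    push_neg at hcon
    have hle : ‖v 0‖ ≤ ‖c‖ := by
      rw [EuclideanSpace.norm_eq, EuclideanSpace.norm_eq]
      apply Real.sqrt_le_sqrt
      apply Finset.sum_le_sum
      intro i _
      rw [Real.norm_eq_abs, Real.norm_eq_abs, abs_of_nonneg (hvnonneg 0 i),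
        abs_of_nonneg (hc i).le]
      nlinarith [hvnonneg 0 i, hcon i, (hc i).le]
    linarith [hlow 0]
  obtain ⟨i, hci⟩ := hex
  -- all labels are negative in coordinate i
  have hlabneg : ∀ J : Fin (N+1), lab J i < 0 := by
    intro J
    have hJi : c i < v J i := lt_of_lt_of_le hci (hlo J i)
    have hlabJ : lab J i = (1 - t J) * c i + t J * φ (v J) i - v J i := by
      rw [hlab]
      simp [PiLp.add_apply, PiLp.sub_apply, PiLp.smul_apply, smul_eq_mul]
    rcases ht01 J with h0 | h1
    · rw [hlabJ, h0]
      have : (1 - (0:ℝ)) * c i + 0 * φ (v J) i - v J i = c i - v J i := by ring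
      rw [this]; linarith
    · rw [hlabJ, h1]
      have : (1 - (1:ℝ)) * c i + 1 * φ (v J) i - v J i = φ (v J) i - v J i := by ring
      rw [this]
      linarith [hφlt J i]
  -- final contradiction via lex positivity
  rintro ⟨W, hLW, hWlex⟩
  have hx : LexPosRow (fun n => ∑ j, (-(lab j i)) * W j n) :=
    lexpos_sum (Nat.succ_pos N) _ _ (fun j => neg_pos.mpr (hlabneg j)) hWlex
  obtain ⟨j0, hj0pos, -⟩ := hx
  have hLWe : ∑ j, L i.succ j * W j j0 = (1 : Matrix (Fin (N+1)) (Fin (N+1)) ℝ) i.succ j0 := by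
    have := congrArg (fun M : Matrix (Fin (N+1)) (Fin (N+1)) ℝ => M i.succ j0) hLW
    simpa [Matrix.mul_apply] using this
  have hsum : (∑ j, (-(lab j i)) * W j j0)
      = -((1 : Matrix (Fin (N+1)) (Fin (N+1)) ℝ) i.succ j0) := by
    rw [← hLWe, ← Finset.sum_neg_distrib]
    apply Finset.sum_congr rfl
    intro j _
    rw [hLrow]
    ring
  have hone : (0:ℝ) ≤ (1 : Matrix (Fin (N+1)) (Fin (N+1)) ℝ) i.succ j0 := by
    rw [Matrix.one_apply]
    split <;> norm_num
  have hthis : 0 < ∑ j, (-(lab j i)) * W j j0 := hj0pos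
  rw [hsum] at hthis
  linarith
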